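/- Let X, P be metric spaces, W a normed vector space, H : X × P ⇒ W, and (x̄, p̄) with 0 ∈ H(x̄, p̄). Define S : P ⇒ X by S(p) := {x ∈ X : 0 ∈ H(x, p)}. If H is open at linear rate c > 0 with respect to x uniformly in p around ((x̄, p̄), 0), then there exist α, β, γ > 0 such that for every (x, p) ∈ B(x̄, α) × B(p̄, β), d(x, S(p)) ≤ c⁻¹ · d(0, H(x, p) ∩ B(0, γ)). -/

import Mathlib

open Metric Set Filter Topology

theorem stmt13 {X P W : Type*} [MetricSpace X] [MetricSpace P]
    [NormedAddCommGroup W]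
    (H : X → P → Set W) (x₀ : X) (p₀ : P) (h0 : (0:W) ∈ H x₀ p₀)
    (c : ℝ) (hc : 0 < c)
    (hopen : ∃ ε > (0:ℝ), ∃ U ∈ 𝓝 x₀, ∃ V ∈ 𝓝 p₀, ∃ W₀ ∈ 𝓝 (0:W),
      ∀ ρ ∈ Set.Ioo (0:ℝ) ε, ∀ p ∈ V, ∀ x ∈ U, ∀ w ∈ H x p ∩ W₀,
        Metric.ball w (c * ρ) ⊆ ⋃ x' ∈ Metric.ball x ρ, H x' p) :
    ∃ α > (0:ℝ), ∃ β > (0:ℝ), ∃ γ > (0:ℝ),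
      ∀ x ∈ Metric.ball x₀ α, ∀ p ∈ Metric.ball p₀ β,
        EMetric.infEdist x {x' | (0:W) ∈ H x' p} ≤
          ENNReal.ofReal c⁻¹ *
            EMetric.infEdist (0:W) (H x p ∩ Metric.ball (0:W) γ) := by
  obtain ⟨ε, hε, U, hU, V, hV, W₀, hW₀, hkey⟩ := hopen
  obtain ⟨α, hα, hUb⟩ := Metric.mem_nhds_iff.mp hU
  obtain ⟨β, hβ, hVb⟩ := Metric.mem_nhds_iff.mp hV
  obtain ⟨γ₀, hγ₀, hWb⟩ := Metric.mem_nhds_iff.mp hW₀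
  have hk0 : ENNReal.ofReal c⁻¹ ≠ 0 := by
    simp [ENNReal.ofReal_eq_zero, not_le, inv_pos, hc]
  have hγpos : 0 < min γ₀ (c * ε / 2) := by positivity
  refine ⟨α, hα, β, hβ, min γ₀ (c * ε / 2), hγpos, ?_⟩
  intro x hx p hp
  set T := H x p ∩ Metric.ball (0:W) (min γ₀ (c * ε / 2)) with hT
  -- key claim
  have claim : ∀ w ∈ T, EMetric.infEdist x {x' | (0:W) ∈ H x' p} ≤
      ENNReal.ofReal c⁻¹ * edist (0:W) w := by
    intro w hw
    have hwH : w ∈ H x p := hw.1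
    have hwn : ‖w‖ < min γ₀ (c * ε / 2) := by
      simpa [mem_ball, dist_zero_right] using hw.2
    have hwW₀ : w ∈ W₀ := hWb (by simp [mem_ball, dist_zero_right]; exact hwn.trans_le (min_le_left _ _))
    have hkey2 : ENNReal.ofReal c⁻¹ * edist (0:W) w = ENNReal.ofReal (c⁻¹ * ‖w‖) := by
      rw [edist_comm, edist_dist, dist_zero_right,
        ← ENNReal.ofReal_mul (by positivity)]
    rw [hkey2]
    apply ENNReal.le_of_forall_pos_le_add
    intro η hη _
    set δ : ℝ := min (η : ℝ) (ε / 2) with hδ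
    have hδpos : 0 < δ := lt_min hη (by linarith)
    set ρ : ℝ := c⁻¹ * ‖w‖ + δ with hρ
    have hρpos : 0 < ρ := by positivity
    have hwε : c⁻¹ * ‖w‖ < ε / 2 := by
      have h1 : ‖w‖ < c * ε / 2 := hwn.trans_le (min_le_right _ _)
      rw [inv_mul_lt_iff₀ hc]
      linarith
    have hρε : ρ < ε := by
      have : δ ≤ ε / 2 := min_le_right _ _
      rw [hρ]; linarith
    have h0ball : (0:W) ∈ Metric.ball w (c * ρ) := by
      simp only [mem_ball, dist_zero_left]
      have : c * ρ = ‖w‖ + c * δ := by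
        rw [hρ]; field_simp
      rw [this]
      nlinarith [norm_nonneg w]
    obtain ⟨x', hx'⟩ := mem_iUnion.mp
      (hkey ρ ⟨hρpos, hρε⟩ p (hVb hp) x (hUb hx) w ⟨hwH, hwW₀⟩ h0ball)
    obtain ⟨hx'ball, hx'H⟩ := mem_iUnion.mp hx'
    have hmem : x' ∈ {x' | (0:W) ∈ H x' p} := hx'H
    calc EMetric.infEdist x {x' | (0:W) ∈ H x' p} ≤ edist x x' :=
          EMetric.infEdist_le_edist_of_mem hmem
      _ ≤ ENNReal.ofReal ρ := by
          rw [edist_dist]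
          exact ENNReal.ofReal_le_ofReal (le_of_lt (by simpa [dist_comm] using hx'ball))
      _ ≤ ENNReal.ofReal (c⁻¹ * ‖w‖) + ↑η := by
          rw [hρ, ENNReal.ofReal_add (by positivity) hδpos.le]
          gcongr
          calc ENNReal.ofReal δ ≤ ENNReal.ofReal (η : ℝ) :=
                ENNReal.ofReal_le_ofReal (min_le_left _ _)
            _ = ↑η := ENNReal.ofReal_coe_nnreal
  rcases T.eq_empty_or_nonempty with hTe | hTn
  · rw [hTe, EMetric.infEdist, EMetric.infEdist, Metric.infEDist_empty, ENNReal.mul_top hk0]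
    exact le_top
  · haveI : Nonempty T := hTn.to_subtype
    have : EMetric.infEdist (0:W) T = ⨅ w : T, edist (0:W) (w : W) := by
      rw [EMetric.infEdist, Metric.infEDist, iInf_subtype']
    rw [this, ENNReal.mul_iInf_of_ne hk0 ENNReal.ofReal_ne_top]
    exact le_iInf fun w => claim w w.2
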